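/- Let f(x) = w^{L⊤} W^{L−1} ⋯ W^1 x be a deep linear network whose weights are exactly balanced rank one: w^L = u r_L and W^ℓ = u r_{ℓ+1} r_ℓᵀ for unit vectors r_1, …, r_L and a scalar u > 0. Then its neural tangent kernel K(x,x') = Σ_{ℓ=1}^L ⟨∂f(x)/∂W^ℓ, ∂f(x')/∂W^ℓ⟩ (with W^L := w^L) equals K(x,x') = u^{2L−2} xᵀ [ (L−1) r_1 r_1ᵀ + I ] x'. -/

import Mathlib

open Matrix

namespace DeepLinear

variable (n : ℕ → ℕ) (L : ℕ)

/-- Forward pass (layer-`k` activation) of a deep linear network given by the chain of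
matrices `W ℓ : ℝ^{n(ℓ+1) × n(ℓ)}`, `ℓ = 0, …, L-1`. -/
def fwd (W : ∀ ℓ : Fin L, Matrix (Fin (n (ℓ + 1))) (Fin (n ℓ)) ℝ)
    (x : Fin (n 0) → ℝ) : (k : ℕ) → k ≤ L → (Fin (n k) → ℝ)
  | 0, _ => x
  | k + 1, hk => W ⟨k, hk⟩ *ᵥ fwd W x k (Nat.le_of_succ_le hk)

/-- Auxiliary downward recursion for the backward pass. -/
def bwdAux (W : ∀ ℓ : Fin L, Matrix (Fin (n (ℓ + 1))) (Fin (n ℓ)) ℝ)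
    (v : Fin (n L) → ℝ) : (m k : ℕ) → k + m = L → (Fin (n k) → ℝ)
  | 0, k, h => fun i => v (Fin.cast (congrArg n h) i)
  | m + 1, k, h => (W ⟨k, by omega⟩)ᵀ *ᵥ bwdAux W v m (k + 1) (by omega)

/-- Backward pass: `(W^{L-1} ⋯ W^k)ᵀ v`. -/
def bwd (W : ∀ ℓ : Fin L, Matrix (Fin (n (ℓ + 1))) (Fin (n ℓ)) ℝ)
    (v : Fin (n L) → ℝ) (k : ℕ) (hk : k ≤ L) : Fin (n k) → ℝ :=
  bwdAux n L W v (L - k) k (by omega)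

/-- Gradient of the scalar network output (the network has a single output unit, `n L = 1`)
with respect to the layer-`ℓ` weight matrix. -/
def netGrad (W : ∀ ℓ : Fin L, Matrix (Fin (n (ℓ + 1))) (Fin (n ℓ)) ℝ)
    (x : Fin (n 0) → ℝ) (ℓ : Fin L) : Matrix (Fin (n (ℓ + 1))) (Fin (n ℓ)) ℝ :=
  vecMulVec (bwd n L W (fun _ => 1) (ℓ + 1) ℓ.isLt)
    (fwd n L W x ℓ (le_of_lt ℓ.isLt))

/-- The neural tangent kernel of the deep linear network: the sum over layers of the
Frobenius inner products of the per-layer gradients of the (scalar) output. -/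
def NTK (W : ∀ ℓ : Fin L, Matrix (Fin (n (ℓ + 1))) (Fin (n ℓ)) ℝ)
    (x x' : Fin (n 0) → ℝ) : ℝ :=
  ∑ ℓ : Fin L, ∑ i, ∑ j, netGrad n L W x ℓ i j * netGrad n L W x' ℓ i j

end DeepLinear

open DeepLinear

/-- The Euclidean (ℓ²) norm of a vector. -/
noncomputable def euclNorm {m : ℕ} (v : Fin m → ℝ) : ℝ :=
  Real.sqrt (∑ i, v i ^ 2)

lemma smul_vecMulVec_mulVec {p q : ℕ} (u : ℝ) (a : Fin p → ℝ) (b v : Fin q → ℝ) :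
    (u • Matrix.vecMulVec a b) *ᵥ v = (u * (b ⬝ᵥ v)) • a := by
  funext i
  simp only [Matrix.mulVec, Matrix.smul_apply, Matrix.vecMulVec_apply, dotProduct,
    Pi.smul_apply, smul_eq_mul, Finset.mul_sum, Finset.sum_mul]
  exact Finset.sum_congr rfl fun j _ => by ring

lemma smul_vecMulVec_transpose_mulVec {p q : ℕ} (u : ℝ) (a : Fin p → ℝ) (b : Fin q → ℝ)
    (v : Fin p → ℝ) :
    (u • Matrix.vecMulVec a b)ᵀ *ᵥ v = (u * (a ⬝ᵥ v)) • b := by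
  funext i
  simp only [Matrix.mulVec, Matrix.transpose_apply, Matrix.smul_apply, Matrix.vecMulVec_apply,
    dotProduct, Pi.smul_apply, smul_eq_mul, Finset.mul_sum, Finset.sum_mul]
  exact Finset.sum_congr rfl fun j _ => by ring

lemma frobenius_vecMulVec {p q : ℕ} (a a' : Fin p → ℝ) (b b' : Fin q → ℝ) :
    ∑ i, ∑ j, Matrix.vecMulVec a b i j * Matrix.vecMulVec a' b' i j
      = (a ⬝ᵥ a') * (b ⬝ᵥ b') := by
  rw [dotProduct, dotProduct, Finset.sum_mul_sum]
  exact Finset.sum_congr rfl fun i _ => Finset.sum_congr rfl fun j _ => by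
    simp [Matrix.vecMulVec_apply]; ring

/-- For a deep linear network (encoded as a chain of `L` matrices, the last of
which is the row `w^{L⊤}`, so `n L = 1`) whose weights are exactly balanced rank one,
`W^ℓ = u r_{ℓ+1} r_ℓᵀ` for unit vectors `r_k` and `u > 0`, the neural tangent kernel equals
`K(x,x') = u^{2L-2} xᵀ[(L-1) r_1 r_1ᵀ + I]x'`. -/
theorem stmt10 {L : ℕ} (hL : 0 < L) (n : ℕ → ℕ) (htop : n L = 1)
    (u : ℝ) (hu : 0 < u)
    (r : (k : ℕ) → Fin (n k) → ℝ)
    (hr : ∀ k ≤ L, euclNorm (r k) = 1)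
    (W : ∀ ℓ : Fin L, Matrix (Fin (n (ℓ + 1))) (Fin (n ℓ)) ℝ)
    (hW : ∀ ℓ : Fin L, W ℓ = u • vecMulVec (r (ℓ + 1)) (r ℓ)) :
    ∀ x x' : Fin (n 0) → ℝ,
      NTK n L W x x' =
        u ^ (2 * L - 2) * (((L : ℝ) - 1) * (r 0 ⬝ᵥ x) * (r 0 ⬝ᵥ x') + x ⬝ᵥ x') := by
  intro x x'
  -- unit norms as dot products
  have hnorm : ∀ k, k ≤ L → (r k) ⬝ᵥ (r k) = 1 := by
    intro k hk
    have h1 : Real.sqrt (∑ i, r k i ^ 2) = 1 := hr k hk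
    rw [Real.sqrt_eq_one] at h1
    simpa [dotProduct, pow_two] using h1
  -- the top layer has a single unit
  haveI hU : Unique (Fin (n L)) := by rw [htop]; infer_instance
  set s : ℝ := r L default with hs_def
  have hs : s * s = 1 := by
    have := hnorm L le_rfl
    simpa [dotProduct, Fintype.sum_unique, pow_two] using this
  -- backward pass
  have hbwd : ∀ m k (h : k + m = L),
      bwdAux n L W (fun _ => 1) m k h = (s * u ^ m) • r k := by
    intro m
    induction m with
    | zero =>
      intro k h
      have hk : k = L := by omega
      subst hk
      funext i
      have hi : i = default := Subsingleton.elim _ _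
      have : Fin.cast (congrArg n h) i = default := Subsingleton.elim _ _
      simp [bwdAux, this, hi, ← hs_def, hs]
    | succ m ih =>
      intro k h
      show (W ⟨k, by omega⟩)ᵀ *ᵥ bwdAux n L W (fun _ => 1) m (k + 1) (by omega)
          = (s * u ^ (m + 1)) • r k
      rw [ih (k + 1) (by omega), hW ⟨k, by omega⟩]
      rw [Matrix.mulVec_smul, smul_vecMulVec_transpose_mulVec]
      rw [smul_smul, hnorm (k + 1) (by omega)]
      congr 1
      ring
  -- forward pass
  have hfwd : ∀ (y : Fin (n 0) → ℝ) k (h : k + 1 ≤ L),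
      fwd n L W y (k + 1) h = (u ^ (k + 1) * (r 0 ⬝ᵥ y)) • r (k + 1) := by
    intro y k
    induction k with
    | zero =>
      intro h
      show W ⟨0, h⟩ *ᵥ fwd n L W y 0 (by omega) = _
      rw [hW ⟨0, h⟩]
      show (u • Matrix.vecMulVec (r 1) (r 0)) *ᵥ y = _
      rw [smul_vecMulVec_mulVec]
      norm_num
    | succ k ih =>
      intro h
      show W ⟨k + 1, h⟩ *ᵥ fwd n L W y (k + 1) (by omega) = _
      rw [ih (by omega), hW ⟨k + 1, h⟩]
      show (u • Matrix.vecMulVec (r (k + 2)) (r (k + 1))) *ᵥ _ = _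
      rw [Matrix.mulVec_smul, smul_vecMulVec_mulVec, smul_smul, hnorm (k + 1) (by omega)]
      congr 1
      ring
  -- squared norm of the backward vector
  have hb2 : ∀ (k : ℕ) (h : k + 1 ≤ L),
      bwd n L W (fun _ => 1) (k + 1) h ⬝ᵥ bwd n L W (fun _ => 1) (k + 1) h
        = u ^ (2 * (L - 1 - k)) := by
    intro k h
    unfold bwd
    rw [hbwd (L - (k + 1)) (k + 1) (by omega)]
    rw [smul_dotProduct, dotProduct_smul, hnorm (k + 1) h]
    have hm : L - 1 - k = L - (k + 1) := by omega
    rw [hm]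
    calc (s * u ^ (L - (k+1))) * ((s * u ^ (L - (k+1))) * 1)
        = (s * s) * (u ^ (L - (k+1)) * u ^ (L - (k+1))) := by ring
      _ = u ^ (2 * (L - (k+1))) := by rw [hs, one_mul, ← pow_add, two_mul]
  -- decompose L
  obtain ⟨M, rfl⟩ : ∃ M, L = M + 1 := ⟨L - 1, by omega⟩
  -- per-layer Frobenius terms
  have hT0 : (∑ i, ∑ j, netGrad n (M + 1) W x 0 i j * netGrad n (M + 1) W x' 0 i j)
      = u ^ (2 * M) * (x ⬝ᵥ x') := by
    unfold netGrad
    rw [frobenius_vecMulVec]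
    have h0 : ((0 : Fin (M + 1)) : ℕ) = 0 := rfl
    rw [show (fwd n (M + 1) W x ((0 : Fin (M+1)) : ℕ) (le_of_lt (Fin.isLt 0))) = x from rfl,
        show (fwd n (M + 1) W x' ((0 : Fin (M+1)) : ℕ) (le_of_lt (Fin.isLt 0))) = x' from rfl]
    simp only [Fin.val_zero]
    erw [hb2 0 (by omega)]
    norm_num
    exact Or.inl rfl
  have hTs : ∀ i : Fin M,
      (∑ a, ∑ b, netGrad n (M + 1) W x i.succ a b * netGrad n (M + 1) W x' i.succ a b)
      = u ^ (2 * M) * ((r 0 ⬝ᵥ x) * (r 0 ⬝ᵥ x')) := by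
    intro i
    unfold netGrad
    rw [frobenius_vecMulVec]
    simp only [Fin.val_succ]
    rw [hfwd x (i : ℕ) (by omega), hfwd x' (i : ℕ) (by omega)]
    rw [hb2 ((i : ℕ) + 1) (by omega)]
    rw [smul_dotProduct, dotProduct_smul, hnorm ((i : ℕ) + 1) (by omega)]
    have hiM : (i : ℕ) < M := i.isLt
    have hexp : 2 * (M + 1 - 1 - ((i : ℕ) + 1)) + (((i : ℕ) + 1) + ((i : ℕ) + 1)) = 2 * M := by
      omega
    calc u ^ (2 * (M + 1 - 1 - ((i : ℕ) + 1))) *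
          ((u ^ ((i : ℕ) + 1) * (r 0 ⬝ᵥ x)) * ((u ^ ((i : ℕ) + 1) * (r 0 ⬝ᵥ x')) * 1))
        = u ^ (2 * (M + 1 - 1 - ((i : ℕ) + 1)) + (((i : ℕ) + 1) + ((i : ℕ) + 1))) *
            ((r 0 ⬝ᵥ x) * (r 0 ⬝ᵥ x')) := by rw [pow_add, pow_add]; ring
      _ = u ^ (2 * M) * ((r 0 ⬝ᵥ x) * (r 0 ⬝ᵥ x')) := by rw [hexp]
  -- assemble
  unfold NTK
  rw [Fin.sum_univ_succ, hT0]
  rw [Finset.sum_congr rfl (fun i _ => hTs i), Finset.sum_const, Finset.card_univ,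
    Fintype.card_fin]
  have hpow : 2 * (M + 1) - 2 = 2 * M := by omega
  rw [hpow]
  push_cast
  ring
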